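/- The 3×3 matrix P = (P_{ij})_{i,j=1}^{3} is diagonal: P_{ij} = 0 whenever i ≠ j. Moreover P₁₁ = P₂₂. -/

import Mathlib

open MeasureTheory

/-- `τ₁ = (1/2)(1/μ + 1/(λ+2μ))`. -/
noncomputable def tau1 (lam mu : ℝ) : ℝ := (1 / 2) * (1 / mu + 1 / (lam + 2 * mu))

/-- `τ₂ = (1/2)(1/μ − 1/(λ+2μ))`. -/
noncomputable def tau2 (lam mu : ℝ) : ℝ := (1 / 2) * (1 / mu - 1 / (lam + 2 * mu))

/-- `ϱ₁ = (γ − ln 2 − iπ/2 − 1)/(8π)`. -/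
noncomputable def varrho1 : ℂ :=
  ((Real.eulerMascheroniConstant : ℂ) - (Real.log 2 : ℝ) - Real.pi * Complex.I / 2 - 1)
    / (8 * Real.pi)

/-- `ϱ₂ = −(γ − ln 2 − iπ/2 − 3/2)/(128π)`. -/
noncomputable def varrho2 : ℂ :=
  -(((Real.eulerMascheroniConstant : ℂ) - (Real.log 2 : ℝ) - Real.pi * Complex.I / 2
      - 3 / 2) / (128 * Real.pi))

/-- `σ₁ = (1/μ²)(ϱ₁ − 5 ln μ/(256π) + 4ϱ₂ + 1/(128π))
        − (1/(λ+2μ)²)(4ϱ₂ + 1/(128π) − ln(λ+2μ)/(64π))`. -/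
noncomputable def sigma1 (lam mu : ℝ) : ℂ :=
  (1 / (mu : ℂ) ^ 2) *
      (varrho1 - 5 * (Real.log mu : ℂ) / (256 * Real.pi) + 4 * varrho2
        + 1 / (128 * Real.pi))
    - (1 / ((lam : ℂ) + 2 * mu) ^ 2) *
        (4 * varrho2 + 1 / (128 * Real.pi)
          - (Real.log (lam + 2 * mu) : ℂ) / (64 * Real.pi))

/-- `σ₂ = (8/μ²)(ϱ₂ − ln μ/(256π)) − (8/(λ+2μ)²)(ϱ₂ − ln(λ+2μ)/(256π)) + 3τ₁τ₂/(16π)`. -/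
noncomputable def sigma2 (lam mu : ℝ) : ℂ :=
  (8 / (mu : ℂ) ^ 2) * (varrho2 - (Real.log mu : ℂ) / (256 * Real.pi))
    - (8 / ((lam : ℂ) + 2 * mu) ^ 2) *
        (varrho2 - (Real.log (lam + 2 * mu) : ℂ) / (256 * Real.pi))
    + 3 * (tau1 lam mu : ℂ) * (tau2 lam mu : ℂ) / (16 * Real.pi)

/-- The complex matrix-valued function `B(x)` with entries
`b_{ij}(x) = δ_{ij}(σ₁|x|² + (τ₁τ₂ − μ⁻²)|x|² ln|x|/(8π)) + σ₂ x_i x_j + (τ₁τ₂/(4π)) x_i x_j ln|x|`. -/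
noncomputable def Bmat (lam mu : ℝ) (x : EuclideanSpace ℝ (Fin 2)) :
    Matrix (Fin 2) (Fin 2) ℂ := fun i j =>
  (if i = j then
      sigma1 lam mu * (‖x‖ : ℂ) ^ 2
        + ((tau1 lam mu : ℂ) * (tau2 lam mu : ℂ) - 1 / (mu : ℂ) ^ 2)
            * (‖x‖ : ℂ) ^ 2 * (Real.log ‖x‖ : ℂ) / (8 * Real.pi)
    else 0)
    + sigma2 lam mu * (x i : ℂ) * (x j : ℂ)
    + ((tau1 lam mu : ℂ) * (tau2 lam mu : ℂ) / (4 * Real.pi))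
        * (x i : ℂ) * (x j : ℂ) * (Real.log ‖x‖ : ℂ)

/-- Partial derivative `∂f/∂y_l` of a complex-valued function on `ℝ²`. -/
noncomputable def pdC (f : EuclideanSpace ℝ (Fin 2) → ℂ) (l : Fin 2)
    (y : EuclideanSpace ℝ (Fin 2)) : ℂ :=
  fderiv ℝ f y (EuclideanSpace.single l 1)

/-- The conormal-derivative kernel `N_B(x,y)`: its `j`-th column is the conormal
derivative, in the variable `y` with outward unit normal `ν(y) = y/R`, of the vector
field `y ↦ B(x−y)e_j`, i.e.
`N_B(x,y)e_j = λ div_y(B(x−y)e_j) ν(y) + μ (D_y(B(x−y)e_j) + D_y(B(x−y)e_j)ᵀ) ν(y)`. -/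
noncomputable def NBker (lam mu R : ℝ) (x y : EuclideanSpace ℝ (Fin 2)) :
    Matrix (Fin 2) (Fin 2) ℂ := fun i j =>
  (lam : ℂ) * (∑ l : Fin 2, pdC (fun z => Bmat lam mu (x - z) l j) l y) * ((y i / R : ℝ) : ℂ)
    + (mu : ℂ) * (∑ l : Fin 2,
        (pdC (fun z => Bmat lam mu (x - z) i j) l y
          + pdC (fun z => Bmat lam mu (x - z) l j) i y) * ((y l / R : ℝ) : ℂ))

/-- The boundary densities `f⁽¹⁾ = (2πR)^{-1/2}(1,0)`, `f⁽²⁾ = (2πR)^{-1/2}(0,1)`,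
`f⁽³⁾ = (2πR³)^{-1/2}(x₂, −x₁)`. -/
noncomputable def fB (R : ℝ) (i : Fin 3) (x : EuclideanSpace ℝ (Fin 2)) : Fin 2 → ℝ :=
  ![![1 / Real.sqrt (2 * Real.pi * R), 0],
    ![0, 1 / Real.sqrt (2 * Real.pi * R)],
    ![x 1 / Real.sqrt (2 * Real.pi * R ^ 3), -(x 0 / Real.sqrt (2 * Real.pi * R ^ 3))]] i

/-- The matrix `P_{ij} = ∫_{∂D}∫_{∂D} f⁽ⁱ⁾(x) · (N_B(x,y) f⁽ʲ⁾(y)) dσ(y) dσ(x)`. -/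
noncomputable def Pmat (lam mu R : ℝ) (i j : Fin 3) : ℂ :=
  ∫ x in Metric.sphere (0 : EuclideanSpace ℝ (Fin 2)) R,
    (∫ y in Metric.sphere (0 : EuclideanSpace ℝ (Fin 2)) R,
      ∑ a : Fin 2, (fB R i x a : ℂ) *
        ((NBker lam mu R x y).mulVec (fun b => (fB R j y b : ℂ))) a
        ∂μH[1]) ∂μH[1]

/-! ### Auxiliary machinery: symmetries of the plane and equivariance of the kernels -/

section AuxSymm

/-- Reflection across the first coordinate axis, as a linear isometry equivalence. -/
noncomputable def Smap : EuclideanSpace ℝ (Fin 2) ≃ₗᵢ[ℝ] EuclideanSpace ℝ (Fin 2) where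
  toFun v := WithLp.toLp 2 ![v 0, -(v 1)]
  invFun v := WithLp.toLp 2 ![v 0, -(v 1)]
  map_add' x y := by ext i; fin_cases i <;> simp <;> ring
  map_smul' c x := by ext i; fin_cases i <;> simp <;> ring
  left_inv v := by ext i; fin_cases i <;> simp
  right_inv v := by ext i; fin_cases i <;> simp
  norm_map' v := by simp [EuclideanSpace.norm_eq, Fin.sum_univ_two]

/-- Rotation by `π/2`, as a linear isometry equivalence. -/
noncomputable def Qmap : EuclideanSpace ℝ (Fin 2) ≃ₗᵢ[ℝ] EuclideanSpace ℝ (Fin 2) where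
  toFun v := WithLp.toLp 2 ![-(v 1), v 0]
  invFun v := WithLp.toLp 2 ![v 1, -(v 0)]
  map_add' x y := by ext i; fin_cases i <;> simp <;> ring
  map_smul' c x := by ext i; fin_cases i <;> simp <;> ring
  left_inv v := by ext i; fin_cases i <;> simp
  right_inv v := by ext i; fin_cases i <;> simp
  norm_map' v := by simp [EuclideanSpace.norm_eq, Fin.sum_univ_two, add_comm]

def scS : Fin 2 → ℂ := ![1, -1]
def qcQ : Fin 2 → ℂ := ![-1, 1]
def pmQ : Fin 2 → Fin 2 := ![1, 0]

@[simp] lemma Smap_c0 (v : EuclideanSpace ℝ (Fin 2)) : Smap v 0 = v 0 := rfl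
@[simp] lemma Smap_c1 (v : EuclideanSpace ℝ (Fin 2)) : Smap v 1 = -(v 1) := rfl
@[simp] lemma Qmap_c0 (v : EuclideanSpace ℝ (Fin 2)) : Qmap v 0 = -(v 1) := rfl
@[simp] lemma Qmap_c1 (v : EuclideanSpace ℝ (Fin 2)) : Qmap v 1 = v 0 := rfl
@[simp] lemma Smap_symm_c0 (v : EuclideanSpace ℝ (Fin 2)) : Smap.symm v 0 = v 0 := rfl
@[simp] lemma Smap_symm_c1 (v : EuclideanSpace ℝ (Fin 2)) : Smap.symm v 1 = -(v 1) := rfl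
@[simp] lemma Qmap_symm_c0 (v : EuclideanSpace ℝ (Fin 2)) : Qmap.symm v 0 = v 1 := rfl
@[simp] lemma Qmap_symm_c1 (v : EuclideanSpace ℝ (Fin 2)) : Qmap.symm v 1 = -(v 0) := rfl

lemma Smap_symm_single0 :
    Smap.symm (EuclideanSpace.single (0 : Fin 2) (1 : ℝ)) = EuclideanSpace.single 0 1 := by
  ext i; fin_cases i <;> simp [EuclideanSpace.single_apply]

lemma Smap_symm_single1 :
    Smap.symm (EuclideanSpace.single (1 : Fin 2) (1 : ℝ)) = -EuclideanSpace.single 1 1 := by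
  ext i; fin_cases i <;> simp [EuclideanSpace.single_apply]

lemma Qmap_symm_single0 :
    Qmap.symm (EuclideanSpace.single (0 : Fin 2) (1 : ℝ)) = -EuclideanSpace.single 1 1 := by
  ext i; fin_cases i <;> simp [EuclideanSpace.single_apply]

lemma Qmap_symm_single1 :
    Qmap.symm (EuclideanSpace.single (1 : Fin 2) (1 : ℝ)) = EuclideanSpace.single 0 1 := by
  ext i; fin_cases i <;> simp [EuclideanSpace.single_apply]

lemma pdC_comp_symm (e : EuclideanSpace ℝ (Fin 2) ≃ₗᵢ[ℝ] EuclideanSpace ℝ (Fin 2))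
    (g : EuclideanSpace ℝ (Fin 2) → ℂ) (l : Fin 2) (y : EuclideanSpace ℝ (Fin 2)) :
    pdC (fun z => g (e.symm z)) l (e y)
      = fderiv ℝ g y (e.symm (EuclideanSpace.single l 1)) := by
  unfold pdC
  have h := (e.symm.toContinuousLinearEquiv).comp_right_fderiv (f := g) (x := e y)
  have h2 : (fun z => g (e.symm z)) = g ∘ (e.symm.toContinuousLinearEquiv) := rfl
  rw [h2, h]; simp

lemma pdC_sign (c : ℂ) (hc : c = 1 ∨ c = -1) (f : EuclideanSpace ℝ (Fin 2) → ℂ) (l : Fin 2)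
    (y : EuclideanSpace ℝ (Fin 2)) :
    pdC (fun z => c * f z) l y = c * pdC f l y := by
  rcases hc with h | h <;> subst h <;> simp [pdC, fderiv_neg (f := f)]

lemma scS_pm (i : Fin 2) : scS i = 1 ∨ scS i = -1 := by fin_cases i <;> simp [scS]
lemma qcQ_pm (i : Fin 2) : qcQ i = 1 ∨ qcQ i = -1 := by fin_cases i <;> simp [qcQ]

lemma signC_mul {a b : ℂ} (ha : a = 1 ∨ a = -1) (hb : b = 1 ∨ b = -1) :
    a * b = 1 ∨ a * b = -1 := by
  rcases ha with h | h <;> rcases hb with h' | h' <;> subst h <;> subst h' <;> norm_num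

lemma Bmat_negv (lam mu : ℝ) (v : EuclideanSpace ℝ (Fin 2)) (i j : Fin 2) :
    Bmat lam mu (-v) i j = Bmat lam mu v i j := by
  unfold Bmat
  simp only [norm_neg, PiLp.neg_apply, Complex.ofReal_neg]
  ring

lemma Bmat_S (lam mu : ℝ) (v : EuclideanSpace ℝ (Fin 2)) (i j : Fin 2) :
    Bmat lam mu (Smap v) i j = scS i * scS j * Bmat lam mu v i j := by
  have hn : ‖Smap v‖ = ‖v‖ := Smap.norm_map v
  fin_cases i <;> fin_cases j <;>
    simp only [Bmat, scS, Fin.zero_eta, Fin.mk_one, Fin.isValue, Smap_c0, Smap_c1, hn,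
      Matrix.cons_val_zero, Matrix.cons_val_one, Matrix.head_cons, Complex.ofReal_neg,
      if_true, if_false] <;>
    norm_num <;> ring

lemma Bmat_Q (lam mu : ℝ) (v : EuclideanSpace ℝ (Fin 2)) (i j : Fin 2) :
    Bmat lam mu (Qmap v) i j = qcQ i * qcQ j * Bmat lam mu v (pmQ i) (pmQ j) := by
  have hn : ‖Qmap v‖ = ‖v‖ := Qmap.norm_map v
  fin_cases i <;> fin_cases j <;>
    simp only [Bmat, qcQ, pmQ, Fin.zero_eta, Fin.mk_one, Fin.isValue, Qmap_c0, Qmap_c1, hn,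
      Matrix.cons_val_zero, Matrix.cons_val_one, Matrix.head_cons, Complex.ofReal_neg,
      if_true, if_false] <;>
    norm_num <;> ring

end AuxSymm
section AuxPd

/-- `pdC` of the kernel entries under the antipodal map. -/
lemma pdC_B_neg (lam mu : ℝ) (x y : EuclideanSpace ℝ (Fin 2)) (a b l : Fin 2) :
    pdC (fun z => Bmat lam mu (-x - z) a b) l (-y)
      = -(pdC (fun z => Bmat lam mu (x - z) a b) l y) := by
  set e : EuclideanSpace ℝ (Fin 2) ≃ₗᵢ[ℝ] EuclideanSpace ℝ (Fin 2) :=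
    LinearIsometryEquiv.neg ℝ with he
  have hfun : (fun z => Bmat lam mu (-x - z) a b)
      = fun z => (fun w => Bmat lam mu (x - w) a b) (e.symm z) := by
    funext z
    show Bmat lam mu (-x - z) a b = Bmat lam mu (x - e.symm z) a b
    have h1 : e.symm z = -z := rfl
    rw [h1, ← Bmat_negv lam mu (x - -z)]
    congr 1
    abel
  rw [hfun]
  have h2 : (-y) = e y := rfl
  rw [h2, pdC_comp_symm e (fun w => Bmat lam mu (x - w) a b) l y]
  have h3 : e.symm (EuclideanSpace.single l 1) = -(EuclideanSpace.single l 1) := rfl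
  rw [h3, map_neg]
  rfl

/-- `pdC` of the kernel entries under the reflection `Smap`. -/
lemma pdC_B_S (lam mu : ℝ) (x y : EuclideanSpace ℝ (Fin 2)) (a b l : Fin 2) :
    pdC (fun z => Bmat lam mu (Smap x - z) a b) l (Smap y)
      = scS a * scS b * scS l * pdC (fun z => Bmat lam mu (x - z) a b) l y := by
  have hfun : (fun z => Bmat lam mu (Smap x - z) a b)
      = fun z => (scS a * scS b) *
          ((fun w => Bmat lam mu (x - w) a b) (Smap.symm z)) := by
    funext z
    have h1 : Smap x - z = Smap (x - Smap.symm z) := by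
      rw [map_sub, Smap.apply_symm_apply]
    rw [h1, Bmat_S]
  rw [hfun, pdC_sign _ (signC_mul (scS_pm a) (scS_pm b)),
    pdC_comp_symm Smap (fun w => Bmat lam mu (x - w) a b) l y]
  fin_cases l
  · rw [show ((⟨0, by norm_num⟩ : Fin 2)) = (0 : Fin 2) from rfl, Smap_symm_single0]
    simp [scS, pdC]
  · rw [show ((⟨1, by norm_num⟩ : Fin 2)) = (1 : Fin 2) from rfl, Smap_symm_single1, map_neg]
    simp [scS, pdC]

/-- `pdC` of the kernel entries under the rotation `Qmap`. -/
lemma pdC_B_Q (lam mu : ℝ) (x y : EuclideanSpace ℝ (Fin 2)) (a b l : Fin 2) :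
    pdC (fun z => Bmat lam mu (Qmap x - z) a b) l (Qmap y)
      = qcQ a * qcQ b * qcQ l *
          pdC (fun z => Bmat lam mu (x - z) (pmQ a) (pmQ b)) (pmQ l) y := by
  have hfun : (fun z => Bmat lam mu (Qmap x - z) a b)
      = fun z => (qcQ a * qcQ b) *
          ((fun w => Bmat lam mu (x - w) (pmQ a) (pmQ b)) (Qmap.symm z)) := by
    funext z
    have h1 : Qmap x - z = Qmap (x - Qmap.symm z) := by
      rw [map_sub, Qmap.apply_symm_apply]
    rw [h1, Bmat_Q]
  rw [hfun, pdC_sign _ (signC_mul (qcQ_pm a) (qcQ_pm b)),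
    pdC_comp_symm Qmap (fun w => Bmat lam mu (x - w) (pmQ a) (pmQ b)) l y]
  fin_cases l
  · rw [show ((⟨0, by norm_num⟩ : Fin 2)) = (0 : Fin 2) from rfl, Qmap_symm_single0, map_neg]
    simp [qcQ, pmQ, pdC]
  · rw [show ((⟨1, by norm_num⟩ : Fin 2)) = (1 : Fin 2) from rfl, Qmap_symm_single1]
    simp [qcQ, pmQ, pdC]

end AuxPd
section AuxNB

lemma NBker_neg (lam mu R : ℝ) (x y : EuclideanSpace ℝ (Fin 2)) (i j : Fin 2) :
    NBker lam mu R (-x) (-y) i j = NBker lam mu R x y i j := by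
  unfold NBker
  simp only [Fin.sum_univ_two, pdC_B_neg, PiLp.neg_apply, neg_div, Complex.ofReal_neg,
    Complex.ofReal_div]
  ring

lemma NBker_S (lam mu R : ℝ) (x y : EuclideanSpace ℝ (Fin 2)) (i j : Fin 2) :
    NBker lam mu R (Smap x) (Smap y) i j = scS i * scS j * NBker lam mu R x y i j := by
  fin_cases i <;> fin_cases j <;>
  · unfold NBker
    simp only [Fin.sum_univ_two, pdC_B_S, Smap_c0, Smap_c1, scS, Fin.zero_eta, Fin.mk_one,
      Fin.isValue, Matrix.cons_val_zero, Matrix.cons_val_one, Matrix.head_cons, neg_div,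
      Complex.ofReal_neg, Complex.ofReal_div]
    ring

lemma NBker_Q (lam mu R : ℝ) (x y : EuclideanSpace ℝ (Fin 2)) (i j : Fin 2) :
    NBker lam mu R (Qmap x) (Qmap y) i j
      = qcQ i * qcQ j * NBker lam mu R x y (pmQ i) (pmQ j) := by
  fin_cases i <;> fin_cases j <;>
  · unfold NBker
    simp only [Fin.sum_univ_two, pdC_B_Q, Qmap_c0, Qmap_c1, qcQ, pmQ, Fin.zero_eta, Fin.mk_one,
      Fin.isValue, Matrix.cons_val_zero, Matrix.cons_val_one, Matrix.head_cons, neg_div,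
      Complex.ofReal_neg, Complex.ofReal_div]
    ring

end AuxNB
section AuxInt

/-- The integrand of `Pmat`. -/
noncomputable def Fint (lam mu R : ℝ) (i j : Fin 3) (x y : EuclideanSpace ℝ (Fin 2)) : ℂ :=
  ∑ a : Fin 2, (fB R i x a : ℂ) *
    ((NBker lam mu R x y).mulVec (fun b => (fB R j y b : ℂ))) a

lemma Pmat_eq (lam mu R : ℝ) (i j : Fin 3) :
    Pmat lam mu R i j
      = ∫ x in Metric.sphere (0 : EuclideanSpace ℝ (Fin 2)) R,
          (∫ y in Metric.sphere (0 : EuclideanSpace ℝ (Fin 2)) R,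
            Fint lam mu R i j x y ∂μH[1]) ∂μH[1] := rfl

lemma setIntegral_sphere_comp (R : ℝ)
    (e : EuclideanSpace ℝ (Fin 2) ≃ₗᵢ[ℝ] EuclideanSpace ℝ (Fin 2))
    (g : EuclideanSpace ℝ (Fin 2) → ℂ) :
    (∫ x in Metric.sphere (0 : EuclideanSpace ℝ (Fin 2)) R, g x ∂μH[1])
      = ∫ x in Metric.sphere (0 : EuclideanSpace ℝ (Fin 2)) R, g (e x) ∂μH[1] := by
  have hmp : MeasurePreserving e (μH[1]) (μH[1]) :=
    e.toIsometryEquiv.measurePreserving_hausdorffMeasure 1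
  have hemb : MeasurableEmbedding e := e.toHomeomorph.measurableEmbedding
  have hpre : (e : EuclideanSpace ℝ (Fin 2) → EuclideanSpace ℝ (Fin 2)) ⁻¹'
      Metric.sphere (0 : EuclideanSpace ℝ (Fin 2)) R = Metric.sphere 0 R := by
    ext z
    simp [mem_sphere_zero_iff_norm, e.norm_map]
  rw [← hmp.setIntegral_preimage_emb hemb g (Metric.sphere 0 R), hpre]

lemma Pmat_cov (lam mu R : ℝ) (i j : Fin 3)
    (e : EuclideanSpace ℝ (Fin 2) ≃ₗᵢ[ℝ] EuclideanSpace ℝ (Fin 2)) :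
    Pmat lam mu R i j
      = ∫ x in Metric.sphere (0 : EuclideanSpace ℝ (Fin 2)) R,
          (∫ y in Metric.sphere (0 : EuclideanSpace ℝ (Fin 2)) R,
            Fint lam mu R i j (e x) (e y) ∂μH[1]) ∂μH[1] := by
  rw [Pmat_eq,
    setIntegral_sphere_comp R e
      (fun x => ∫ y in Metric.sphere (0 : EuclideanSpace ℝ (Fin 2)) R,
        Fint lam mu R i j x y ∂μH[1])]
  congr 1
  funext x
  exact setIntegral_sphere_comp R e (fun y => Fint lam mu R i j (e x) y)

lemma Pmat_transform (lam mu R : ℝ) (i j i' j' : Fin 3) (c : ℂ)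
    (e : EuclideanSpace ℝ (Fin 2) ≃ₗᵢ[ℝ] EuclideanSpace ℝ (Fin 2))
    (h : ∀ x y, Fint lam mu R i j (e x) (e y) = c * Fint lam mu R i' j' x y) :
    Pmat lam mu R i j = c * Pmat lam mu R i' j' := by
  rw [Pmat_cov lam mu R i j e]
  simp only [h]
  rw [Pmat_eq]
  simp only [← smul_eq_mul, integral_smul]

lemma Pmat_zero_of_anti (lam mu R : ℝ) (i j : Fin 3)
    (e : EuclideanSpace ℝ (Fin 2) ≃ₗᵢ[ℝ] EuclideanSpace ℝ (Fin 2))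
    (h : ∀ x y, Fint lam mu R i j (e x) (e y) = (-1 : ℂ) * Fint lam mu R i j x y) :
    Pmat lam mu R i j = 0 := by
  have h2 := Pmat_transform lam mu R i j i j (-1) e h
  have h3 : (2 : ℂ) * Pmat lam mu R i j = 0 := by linear_combination h2
  exact (mul_eq_zero.mp h3).resolve_left two_ne_zero

end AuxInt
section AuxFint

variable (lam mu R : ℝ)

lemma Fint_S_01 (x y : EuclideanSpace ℝ (Fin 2)) :
    Fint lam mu R 0 1 (Smap x) (Smap y) = (-1 : ℂ) * Fint lam mu R 0 1 x y := by
  simp only [Fint, fB, Fin.sum_univ_two, Matrix.mulVec, dotProduct, NBker_S, scS,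
    Matrix.cons_val_zero, Matrix.cons_val_one, Matrix.head_cons, Smap_c0, Smap_c1,
    Fin.isValue, Complex.ofReal_zero, Complex.ofReal_neg, Complex.ofReal_div]
  ring

lemma Fint_S_10 (x y : EuclideanSpace ℝ (Fin 2)) :
    Fint lam mu R 1 0 (Smap x) (Smap y) = (-1 : ℂ) * Fint lam mu R 1 0 x y := by
  simp only [Fint, fB, Fin.sum_univ_two, Matrix.mulVec, dotProduct, NBker_S, scS,
    Matrix.cons_val_zero, Matrix.cons_val_one, Matrix.head_cons, Smap_c0, Smap_c1,
    Fin.isValue, Complex.ofReal_zero, Complex.ofReal_neg, Complex.ofReal_div]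
  ring

lemma Fint_neg_02 (x y : EuclideanSpace ℝ (Fin 2)) :
    Fint lam mu R 0 2 (-x) (-y) = (-1 : ℂ) * Fint lam mu R 0 2 x y := by
  simp only [Fint, fB, Fin.sum_univ_two, Matrix.mulVec, dotProduct, NBker_neg,
    PiLp.neg_apply, Matrix.cons_val_zero, Matrix.cons_val_one, Matrix.head_cons,
    Matrix.cons_val_two, Matrix.tail_cons, Fin.isValue, neg_div,
    Complex.ofReal_zero, Complex.ofReal_neg, Complex.ofReal_div]
  ring

lemma Fint_neg_20 (x y : EuclideanSpace ℝ (Fin 2)) :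
    Fint lam mu R 2 0 (-x) (-y) = (-1 : ℂ) * Fint lam mu R 2 0 x y := by
  simp only [Fint, fB, Fin.sum_univ_two, Matrix.mulVec, dotProduct, NBker_neg,
    PiLp.neg_apply, Matrix.cons_val_zero, Matrix.cons_val_one, Matrix.head_cons,
    Matrix.cons_val_two, Matrix.tail_cons, Fin.isValue, neg_div,
    Complex.ofReal_zero, Complex.ofReal_neg, Complex.ofReal_div]
  ring

lemma Fint_neg_12 (x y : EuclideanSpace ℝ (Fin 2)) :
    Fint lam mu R 1 2 (-x) (-y) = (-1 : ℂ) * Fint lam mu R 1 2 x y := by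
  simp only [Fint, fB, Fin.sum_univ_two, Matrix.mulVec, dotProduct, NBker_neg,
    PiLp.neg_apply, Matrix.cons_val_zero, Matrix.cons_val_one, Matrix.head_cons,
    Matrix.cons_val_two, Matrix.tail_cons, Fin.isValue, neg_div,
    Complex.ofReal_zero, Complex.ofReal_neg, Complex.ofReal_div]
  ring

lemma Fint_neg_21 (x y : EuclideanSpace ℝ (Fin 2)) :
    Fint lam mu R 2 1 (-x) (-y) = (-1 : ℂ) * Fint lam mu R 2 1 x y := by
  simp only [Fint, fB, Fin.sum_univ_two, Matrix.mulVec, dotProduct, NBker_neg,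
    PiLp.neg_apply, Matrix.cons_val_zero, Matrix.cons_val_one, Matrix.head_cons,
    Matrix.cons_val_two, Matrix.tail_cons, Fin.isValue, neg_div,
    Complex.ofReal_zero, Complex.ofReal_neg, Complex.ofReal_div]
  ring

lemma Fint_Q_11 (x y : EuclideanSpace ℝ (Fin 2)) :
    Fint lam mu R 1 1 (Qmap x) (Qmap y) = (1 : ℂ) * Fint lam mu R 0 0 x y := by
  simp only [Fint, fB, Fin.sum_univ_two, Matrix.mulVec, dotProduct, NBker_Q, qcQ, pmQ,
    Matrix.cons_val_zero, Matrix.cons_val_one, Matrix.head_cons, Qmap_c0, Qmap_c1,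
    Fin.isValue, Complex.ofReal_zero, Complex.ofReal_neg, Complex.ofReal_div]
  ring

end AuxFint
/-- The `3×3` matrix `P` is diagonal (`P_{ij} = 0` for `i ≠ j`), and `P₁₁ = P₂₂`. -/
theorem Pmat_diagonal (R lam mu : ℝ) (hR : 0 < R)
    (hmu : 0 < mu) (hlm : 0 < lam + mu) :
    (∀ i j : Fin 3, i ≠ j → Pmat lam mu R i j = 0)
    ∧ Pmat lam mu R 0 0 = Pmat lam mu R 1 1 := by
  constructor
  · intro i j hij
    fin_cases i <;> fin_cases j <;>
      first
        | exact absurd rfl hij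
        | exact Pmat_zero_of_anti lam mu R 0 1 Smap (fun x y => Fint_S_01 lam mu R x y)
        | exact Pmat_zero_of_anti lam mu R 1 0 Smap (fun x y => Fint_S_10 lam mu R x y)
        | exact Pmat_zero_of_anti lam mu R 0 2 (LinearIsometryEquiv.neg ℝ)
            (fun x y => Fint_neg_02 lam mu R x y)
        | exact Pmat_zero_of_anti lam mu R 2 0 (LinearIsometryEquiv.neg ℝ)
            (fun x y => Fint_neg_20 lam mu R x y)
        | exact Pmat_zero_of_anti lam mu R 1 2 (LinearIsometryEquiv.neg ℝ)
            (fun x y => Fint_neg_12 lam mu R x y)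
        | exact Pmat_zero_of_anti lam mu R 2 1 (LinearIsometryEquiv.neg ℝ)
            (fun x y => Fint_neg_21 lam mu R x y)
  · have h := Pmat_transform lam mu R 1 1 0 0 1 Qmap (fun x y => Fint_Q_11 lam mu R x y)
    rw [h, one_mul]
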